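/- The function π given by π(r) = ∏_{k=1}^B λ_{r(k)}/(Λ - Σ_{i=1}^{k-1} λ_{r(i)}) satisfies the full balance equations of the LRU Markov chain: for every B-permutation r, (Λ - λ_{r(1)})·π(r) = Σ_{n ∉ r} λ_{r(1)}·π(M_n⁻¹(r)) + Σ_{j=2}^B λ_{r(1)}·π(H_j⁻¹(r)). -/

import Mathlib

open Finset

/-- The LRU invariant candidate (0-based ranks). -/
noncomputable def piLRU (N B : ℕ) (lam : Fin N → ℝ) (r : Fin B → Fin N) : ℝ :=
  ∏ k : Fin B,
    lam (r k) / ((∑ n, lam n) - ∑ i ∈ Finset.univ.filter (fun i : Fin B => i < k), lam (r i))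

/-- Pre-image of `r` under the LRU miss transition: `n ∉ r` is the oldest object,
the remaining ones are shifted up by one. -/
def Minv (N B : ℕ) (n : Fin N) (r : Fin B → Fin N) : Fin B → Fin N :=
  fun k => if h : k.val + 1 < B then r ⟨k.val + 1, h⟩ else n

/-- Pre-image of `r` under the LRU hit transition at (1-based) rank `j`:
`r 0` sits at rank `j`, objects above it are shifted up by one. -/
def Hinv (N B : ℕ) (j : ℕ) (r : Fin B → Fin N) : Fin B → Fin N :=
  fun l =>
    if h : l.val + 1 < j ∧ l.val + 1 < B then r ⟨l.val + 1, h.2⟩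
    else if l.val + 1 = j then r ⟨0, lt_of_le_of_lt (Nat.zero_le _) l.isLt⟩
    else r l

lemma piLRU_eq_range (N B : ℕ) (lam : Fin N → ℝ) (s : Fin B → Fin N) (f : ℕ → ℝ)
    (hf : ∀ i (h : i < B), f i = lam (s ⟨i, h⟩)) :
    piLRU N B lam s = ∏ k ∈ range B, f k / ((∑ n, lam n) - ∑ i ∈ range k, f i) := by
  rw [piLRU, ← Fin.prod_univ_eq_prod_range (fun k => f k / ((∑ n, lam n) - ∑ i ∈ range k, f i)) B]
  refine Finset.prod_congr rfl fun k _ => ?_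
  have hnum : lam (s k) = f k.val := by rw [hf _ k.isLt]
  have hden : ∑ i ∈ univ.filter (fun i : Fin B => i < k), lam (s i)
      = ∑ i ∈ range k.val, f i := by
    rw [Finset.sum_filter]
    have h1 : ∀ i : Fin B, (if i < k then lam (s i) else 0)
        = (fun m => if m < k.val then f m else 0) i.val := by
      intro i
      rcases i with ⟨i, hi⟩
      simp only [Fin.lt_def, hf i hi]
    rw [Finset.sum_congr rfl fun i _ => h1 i,
      Fin.sum_univ_eq_sum_range (fun m => if m < k.val then f m else 0) B, ← Finset.sum_filter]
    congr 1
    ext m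
    simp only [Finset.mem_filter, Finset.mem_range]
    exact ⟨fun h => h.2, fun h => ⟨h.trans k.isLt, h⟩⟩
  rw [hnum, hden]


/-- `piLRU` satisfies the full balance equations of the LRU Markov chain. -/
theorem piLRU_full_balance (N B : ℕ) (hB : 0 < B) (hBN : B < N)
    (lam : Fin N → ℝ) (hlam : ∀ n, 0 < lam n)
    (r : Fin B → Fin N) (hr : Function.Injective r) :
    ((∑ n, lam n) - lam (r ⟨0, hB⟩)) * piLRU N B lam r =
      (∑ n ∈ Finset.univ.filter (fun n : Fin N => ∀ k, r k ≠ n),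
        lam (r ⟨0, hB⟩) * piLRU N B lam (Minv N B n r))
      + ∑ j ∈ Finset.Icc 2 B, lam (r ⟨0, hB⟩) * piLRU N B lam (Hinv N B j r) := by
  classical
  obtain ⟨C, rfl⟩ : ∃ C, B = C + 1 := ⟨B - 1, by omega⟩
  set Λ := ∑ n, lam n with hΛdef
  set g : ℕ → ℝ := fun i => if h : i < C + 1 then lam (r ⟨i, h⟩) else 1 with hgdef
  have hgval : ∀ i (h : i < C + 1), g i = lam (r ⟨i, h⟩) := fun i h => by simp only [hgdef, dif_pos h]
  have hgpos : ∀ i, 0 < g i := by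
    intro i
    by_cases h : i < C + 1 <;> simp only [hgdef, h, dite_true, dite_false, hlam, zero_lt_one, not_false_eq_true]
  set S : ℕ → ℝ := fun k => ∑ i ∈ range k, g i with hSdef
  have hg0 : lam (r ⟨0, hB⟩) = g 0 := (hgval 0 hB).symm
  -- sum over the cache content
  have hSB : S (C + 1) = ∑ k : Fin (C + 1), lam (r k) := by
    simp only [hSdef]
    rw [← Fin.sum_univ_eq_sum_range g (C + 1)]
    exact Finset.sum_congr rfl fun i _ => by rw [hgval _ i.isLt]
  have himg : univ.filter (fun n : Fin N => ∀ k, r k ≠ n) = univ \ Finset.image r univ := by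
    ext n
    simp
  have hne : (univ \ Finset.image r univ : Finset (Fin N)).Nonempty := by
    rw [← Finset.card_pos, Finset.card_sdiff_of_subset (subset_univ _)]
    have h3 : (Finset.image r univ).card ≤ C + 1 := by
      simpa using Finset.card_image_le (f := r) (s := (univ : Finset (Fin (C + 1))))
    simp only [Finset.card_univ, Fintype.card_fin]
    omega
  -- the complement sum
  have hcompl : ∑ n ∈ univ.filter (fun n : Fin N => ∀ k, r k ≠ n), lam n = Λ - S (C + 1) := by
    rw [himg, Finset.sum_sdiff_eq_sub (subset_univ _), hSB,
      Finset.sum_image (fun a _ b _ h => hr h), hΛdef]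
  have hpos : ∀ k ≤ C + 1, 0 < Λ - S k := by
    intro k hk
    have h1 : S k ≤ S (C + 1) := by
      apply Finset.sum_le_sum_of_subset_of_nonneg (Finset.range_subset_range.mpr hk)
      exact fun i _ _ => (hgpos i).le
    have h2 : 0 < Λ - S (C + 1) := by
      rw [← hcompl, himg]
      exact Finset.sum_pos (fun n _ => hlam n) hne
    linarith
  -- extended versions of the pre-image states
  set gH : ℕ → ℕ → ℝ :=
    fun m i => if h : i < C + 1 then lam (Hinv N (C + 1) m r ⟨i, h⟩) else 1 with hgHdef
  set gM : Fin N → ℕ → ℝ :=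
    fun n i => if h : i < C + 1 then lam (Minv N (C + 1) n r ⟨i, h⟩) else 1 with hgMdef
  have hHval : ∀ m, m + 1 ≤ C + 1 → ∀ i, i < C + 1 →
      gH (m + 1) i = if i < m then g (i + 1) else if i = m then g 0 else g i := by
    intro m hm i h
    simp only [hgHdef, dif_pos h, Hinv]
    split_ifs with h1 h2 h3 h4 h5 h6 h7 h8 <;>
      first
        | omega
        | (rw [hgval _ (by omega)])
        | (rw [hgval 0 hB])
  have hMval : ∀ (n : Fin N) i, i < C + 1 →
      gM n i = if i < C then g (i + 1) else lam n := by
    intro n i h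
    simp only [hgMdef, dif_pos h, Minv]
    split_ifs with h1 h2 h3 <;>
      first
        | omega
        | rfl
        | (rw [hgval _ (by omega)])
  -- prefix sums for the hit pre-image
  have hpreH1 : ∀ m, m + 1 ≤ C + 1 → ∀ l, l ≤ m →
      ∑ i ∈ range l, gH (m + 1) i = S (l + 1) - g 0 := by
    intro m hm l hl
    have h1 : ∀ i ∈ range l, gH (m + 1) i = g (i + 1) := by
      intro i hi
      rw [mem_range] at hi
      rw [hHval m hm i (by omega), if_pos (by omega)]
    rw [Finset.sum_congr rfl h1]
    have h2 := Finset.sum_range_succ' g l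
    simp only [hSdef]
    linarith
  have hpreH2 : ∀ m, m + 1 ≤ C + 1 → ∀ l, m + 1 ≤ l → l ≤ C + 1 →
      ∑ i ∈ range l, gH (m + 1) i = S l := by
    intro m hm l hl1 hl2
    rw [← Finset.sum_range_add_sum_Ico _ hl1]
    have h1 : ∑ i ∈ range (m + 1), gH (m + 1) i = S (m + 1) := by
      rw [Finset.sum_range_succ, hpreH1 m hm m le_rfl,
        hHval m hm m (by omega), if_neg (by omega), if_pos rfl]
      ring
    have h2 : ∑ i ∈ Ico (m + 1) l, gH (m + 1) i = S l - S (m + 1) := by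
      have h3 : ∀ i ∈ Ico (m + 1) l, gH (m + 1) i = g i := by
        intro i hi
        rw [mem_Ico] at hi
        rw [hHval m hm i (by omega), if_neg (by omega), if_neg (by omega)]
      rw [Finset.sum_congr rfl h3, Finset.sum_Ico_eq_sub _ (by omega)]
    rw [h1, h2]
    ring
  -- closed form for the hit pre-images
  have hHclosed : ∀ m, m + 1 ≤ C + 1 →
      piLRU N (C + 1) lam (Hinv N (C + 1) (m + 1) r)
        = (∏ l ∈ range m, g (l + 1) / (Λ - S (l + 1) + g 0))
          * (g 0 / (Λ - S (m + 1) + g 0))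
          * ∏ l ∈ Ico (m + 1) (C + 1), g l / (Λ - S l) := by
    intro m hm
    rw [piLRU_eq_range N (C + 1) lam _ (gH (m + 1))
      (fun i h => by simp only [hgHdef, dif_pos h])]
    rw [← Finset.prod_range_mul_prod_Ico _ hm, ← hΛdef]
    congr 1
    · rw [Finset.prod_range_succ]
      congr 1
      · refine Finset.prod_congr rfl fun l hl => ?_
        rw [mem_range] at hl
        rw [hHval m hm l (by omega), if_pos hl, hpreH1 m hm l (by omega)]
        congr 1
        ring
      · rw [hHval m hm m (by omega), if_neg (by omega), if_pos rfl, hpreH1 m hm m le_rfl]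
        congr 1
        ring
    · refine Finset.prod_congr rfl fun l hl => ?_
      rw [mem_Ico] at hl
      rw [hHval m hm l (by omega), if_neg (by omega), if_neg (by omega),
        hpreH2 m hm l (by omega) (by omega)]
  -- closed form for the miss pre-images
  have hMclosed : ∀ n : Fin N,
      piLRU N (C + 1) lam (Minv N (C + 1) n r)
        = (∏ l ∈ range C, g (l + 1) / (Λ - S (l + 1) + g 0))
          * (lam n / (Λ - S (C + 1) + g 0)) := by
    intro n
    have hpreM : ∀ l, l ≤ C → ∑ i ∈ range l, gM n i = S (l + 1) - g 0 := by
      intro l hl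
      have h1 : ∀ i ∈ range l, gM n i = g (i + 1) := by
        intro i hi
        rw [mem_range] at hi
        rw [hMval n i (by omega), if_pos (by omega)]
      rw [Finset.sum_congr rfl h1]
      have h2 := Finset.sum_range_succ' g l
      simp only [hSdef]
      linarith
    rw [piLRU_eq_range N (C + 1) lam _ (gM n) (fun i h => by simp only [hgMdef, dif_pos h])]
    rw [Finset.prod_range_succ, ← hΛdef]
    congr 1
    · refine Finset.prod_congr rfl fun l hl => ?_
      rw [mem_range] at hl
      rw [hMval n l (by omega), if_pos hl, hpreM l (by omega)]
      congr 1
      ring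
    · rw [hMval n C (by omega), if_neg (by omega), hpreM C le_rfl]
      congr 1
      ring
  -- telescoping step
  have hstep : ∀ m, m + 2 ≤ C + 1 →
      (Λ - S (m + 2) + g 0) * piLRU N (C + 1) lam (Hinv N (C + 1) (m + 2) r)
        = (Λ - S (m + 1)) * piLRU N (C + 1) lam (Hinv N (C + 1) (m + 1) r) := by
    intro m hm
    rw [show m + 2 = (m + 1) + 1 from rfl, hHclosed (m + 1) hm, hHclosed m (by omega)]
    have h1 : Λ - S (m + 2) + g 0 ≠ 0 := by
      have := hpos (m + 2) (by omega); have := hgpos 0; positivity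
    have h2 : Λ - S (m + 1) ≠ 0 := ne_of_gt (hpos _ (by omega))
    have h3 : Λ - S (m + 1) + g 0 ≠ 0 := by
      have := hpos (m + 1) (by omega); have := hgpos 0; positivity
    rw [Finset.prod_range_succ,
      Finset.prod_eq_prod_Ico_succ_bot (show m + 1 < C + 1 by omega)]
    set x := Λ - S (m + 2) + g 0 with hxd
    set y := Λ - S (m + 1) + g 0 with hyd
    set z := Λ - S (m + 1) with hzd
    set u := g 0 with hud
    set v := g (m + 1) with hvd
    set P := ∏ l ∈ range m, g (l + 1) / (Λ - S (l + 1) + g 0) with hPd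
    set T := ∏ l ∈ Ico (m + 2) (C + 1), g l / (Λ - S l) with hTd
    clear_value x y z u v P T
    field_simp
  -- induction: partial balance
  have hkey : ∀ J, 1 ≤ J → J ≤ C + 1 →
      g 0 * (∑ j ∈ Icc 2 J, piLRU N (C + 1) lam (Hinv N (C + 1) j r))
        + (Λ - S J) * piLRU N (C + 1) lam (Hinv N (C + 1) J r)
      = (Λ - g 0) * piLRU N (C + 1) lam r := by
    have hH1 : Hinv N (C + 1) 1 r = r := by
      funext l
      simp only [Hinv]
      rw [dif_neg (by omega)]
      by_cases hl : l.val + 1 = 1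
      · rw [if_pos hl]
        have hl0 : (l : ℕ) = 0 := by omega
        exact congrArg r (Fin.ext (by simp [hl0]))
      · rw [if_neg hl]
    intro J
    induction J with
    | zero => omega
    | succ K ih =>
      intro _ hK
      rcases K with _ | m
      · -- J = 1
        rw [show Icc 2 1 = (∅ : Finset ℕ) from rfl, Finset.sum_empty, mul_zero, zero_add, hH1]
        have hS1 : S 1 = g 0 := by simp [hSdef]
        rw [hS1]
      · -- J = m + 2
        have ih' := ih (by omega) (by omega)
        rw [Finset.sum_Icc_succ_top (by omega)]
        rw [show m + 1 + 1 = m + 2 from rfl] at *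
        have hst := hstep m (by omega)
        calc g 0 * ((∑ j ∈ Icc 2 (m + 1), piLRU N (C + 1) lam (Hinv N (C + 1) j r))
                + piLRU N (C + 1) lam (Hinv N (C + 1) (m + 2) r))
              + (Λ - S (m + 2)) * piLRU N (C + 1) lam (Hinv N (C + 1) (m + 2) r)
            = g 0 * (∑ j ∈ Icc 2 (m + 1), piLRU N (C + 1) lam (Hinv N (C + 1) j r))
              + (Λ - S (m + 2) + g 0) * piLRU N (C + 1) lam (Hinv N (C + 1) (m + 2) r) := by
              ring
          _ = g 0 * (∑ j ∈ Icc 2 (m + 1), piLRU N (C + 1) lam (Hinv N (C + 1) j r))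
              + (Λ - S (m + 1)) * piLRU N (C + 1) lam (Hinv N (C + 1) (m + 1) r) := by
              rw [hst]
          _ = (Λ - g 0) * piLRU N (C + 1) lam r := ih'
  -- the miss sum
  have hD : Λ - S (C + 1) + g 0 ≠ 0 := by
    have := hpos (C + 1) le_rfl; have := hgpos 0; positivity
  have hmiss : ∑ n ∈ univ.filter (fun n : Fin N => ∀ k, r k ≠ n),
      lam (r ⟨0, hB⟩) * piLRU N (C + 1) lam (Minv N (C + 1) n r)
      = (Λ - S (C + 1)) * piLRU N (C + 1) lam (Hinv N (C + 1) (C + 1) r) := by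
    have h1 : ∀ n ∈ univ.filter (fun n : Fin N => ∀ k, r k ≠ n),
        lam (r ⟨0, hB⟩) * piLRU N (C + 1) lam (Minv N (C + 1) n r)
        = (g 0 * ((∏ l ∈ range C, g (l + 1) / (Λ - S (l + 1) + g 0))
            * (1 / (Λ - S (C + 1) + g 0)))) * lam n := by
      intro n _
      rw [hMclosed n, hg0]
      ring
    rw [Finset.sum_congr rfl h1, ← Finset.mul_sum, hcompl,
      hHclosed C le_rfl, Finset.Ico_self, Finset.prod_empty]
    set x := Λ - S (C + 1) + g 0 with hxd
    set z := Λ - S (C + 1) with hzd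
    set u := g 0 with hud
    set P := ∏ l ∈ range C, g (l + 1) / (Λ - S (l + 1) + g 0) with hPd
    clear_value x z u P
    field_simp
  -- assemble
  rw [hmiss, ← Finset.mul_sum, hg0]
  have hk := hkey (C + 1) (by omega) le_rfl
  linarith [hk]
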